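/- arXiv:0706.0415 — 4 statements merged into one kernel-verified Lean document; each statement's English description precedes it below -/
import Mathlib

section
/- Let p(x,ξ) = (1/2)∑_{j,k} a_{j,k}(x)ξⱼξₖ be a smooth Hamiltonian on ℝ²ⁿ with complete flow exp(tH_p), let p₀(x,ξ) = |ξ|²/2 with flow exp(tH_{p₀})(x,ξ) = (x+tξ, ξ), and let κ(x,ξ) = (x - iξ, ξ) be the complex linear map on ℂ²ⁿ. Define b(s,z,ζ) = (1/2)∑_{j,k}(a_{j,k}(z + iζ + sζ) - δ_{j,k})ζⱼζₖ (with a_{j,k} extended holomorphically) and let R_s be the time-s flow of the (time-dependent) Hamiltonian b. Then R_s = κ ∘ exp(-sH_{p₀}) ∘ exp(sH_p) ∘ κ⁻¹. -/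
/-- Complex phase space `ℂⁿ × ℂⁿ`. -/
abbrev PhaseC (n : ℕ) := (Fin n → ℂ) × (Fin n → ℂ)

/-- The principal symbol `p(x,ξ) = (1/2)∑ a_{jk}(x) ξⱼ ξₖ` (holomorphically extended). -/
noncomputable def pSymb (n : ℕ) (a : Fin n → Fin n → (Fin n → ℂ) → ℂ) :
    PhaseC n → ℂ :=
  fun w => (1 / 2) * ∑ j, ∑ k, a j k w.1 * w.2 j * w.2 k

/-- `b(s,z,ζ) = (1/2)∑ (a_{jk}(z + iζ + sζ) - δ_{jk}) ζⱼ ζₖ`. -/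
noncomputable def bSymb (n : ℕ) (a : Fin n → Fin n → (Fin n → ℂ) → ℂ) (s : ℝ) :
    PhaseC n → ℂ :=
  fun w => (1 / 2) * ∑ j, ∑ k,
    (a j k (fun l => w.1 l + (Complex.I + (s : ℂ)) * w.2 l)
      - if j = k then 1 else 0) * w.2 j * w.2 k

/-- Hamiltonian vector field `(∂f/∂ζ, -∂f/∂z)` of `f` on complex phase space. -/
noncomputable def hamVF (n : ℕ) (f : PhaseC n → ℂ) : PhaseC n → PhaseC n :=
  fun w => (fun j => fderiv ℂ f w (0, Pi.single j 1),
            fun j => -fderiv ℂ f w (Pi.single j 1, 0))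

/-- `κ(x,ξ) = (x - iξ, ξ)`. -/
def kappaMap (n : ℕ) : PhaseC n → PhaseC n :=
  fun w => (fun j => w.1 j - Complex.I * w.2 j, w.2)

/-- `κ⁻¹(z,ζ) = (z + iζ, ζ)`. -/
def kappaInv (n : ℕ) : PhaseC n → PhaseC n :=
  fun w => (fun j => w.1 j + Complex.I * w.2 j, w.2)

/-- The free flow `exp(tH_{p₀})(x,ξ) = (x + tξ, ξ)`. -/
def freeFlow (n : ℕ) (t : ℝ) : PhaseC n → PhaseC n :=
  fun w => (fun j => w.1 j + (t : ℂ) * w.2 j, w.2)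



open Metric Set

section helpers
variable {E : Type*} [NormedAddCommGroup E] [NormedSpace ℂ E]

lemma slice_hasDerivAt (f : E → ℂ) (hf : Differentiable ℂ f) (z v : E) :
    HasDerivAt (fun lam : ℂ => f (z + lam • v)) (fderiv ℂ f z v) 0 := by
  have hc : HasDerivAt (fun lam : ℂ => z + lam • v) v 0 := by
    simpa using ((hasDerivAt_id (0:ℂ)).smul_const v).const_add z
  have := (hf (z + (0:ℂ) • v)).hasFDerivAt.comp_hasDerivAt 0 hc
  simp only [zero_smul, add_zero] at this
  exact this

lemma slice_diff (f : E → ℂ) (hf : Differentiable ℂ f) (z v : E) :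
    Differentiable ℂ (fun lam : ℂ => f (z + lam • v)) :=
  hf.comp ((differentiable_id.smul_const v).const_add z)

lemma norm_fderiv_apply_le (f : E → ℂ) (hf : Differentiable ℂ f) {r C : ℝ} (hr : 0 < r)
    (z v : E) (hb : ∀ lam : ℂ, ‖lam‖ = r → ‖f (z + lam • v)‖ ≤ C) :
    ‖fderiv ℂ f z v‖ ≤ C / r := by
  have hG := slice_hasDerivAt f hf z v
  rw [← hG.deriv]
  exact Complex.norm_deriv_le_of_forall_mem_sphere_norm_le hr
    (slice_diff f hf z v).diffContOnCl
    (fun lam hl => hb lam (by simpa [mem_sphere_iff_norm] using hl))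

lemma norm_fderiv_sub_apply_le (f : E → ℂ) (hf : Differentiable ℂ f) {r C : ℝ} (hr : 0 < r)
    (z z' v : E) (hb : ∀ lam : ℂ, ‖lam‖ = r → ‖f (z + lam • v) - f (z' + lam • v)‖ ≤ C) :
    ‖fderiv ℂ f z v - fderiv ℂ f z' v‖ ≤ C / r := by
  have hG := (slice_hasDerivAt f hf z v).sub (slice_hasDerivAt f hf z' v)
  rw [← hG.deriv]
  exact Complex.norm_deriv_le_of_forall_mem_sphere_norm_le hr
    ((slice_diff f hf z v).sub (slice_diff f hf z' v)).diffContOnCl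
    (fun lam hl => hb lam (by simpa [mem_sphere_iff_norm] using hl))

lemma norm_fderiv_le_of_bound (f : E → ℂ) (hf : Differentiable ℂ f) {R C : ℝ} (hR : 0 < R)
    (x : E) (hC : ∀ y ∈ closedBall x R, ‖f y‖ ≤ C) : ‖fderiv ℂ f x‖ ≤ C / R := by
  have hC0 : 0 ≤ C := le_trans (norm_nonneg _) (hC x (mem_closedBall_self hR.le))
  refine ContinuousLinearMap.opNorm_le_bound _ (div_nonneg hC0 hR.le) fun v => ?_
  rcases eq_or_ne v 0 with rfl | hv
  · simp
  · have hvn : 0 < ‖v‖ := norm_pos_iff.2 hv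
    have hr : 0 < R / ‖v‖ := div_pos hR hvn
    have key := norm_fderiv_apply_le f hf hr x v (fun lam hl => by
      refine hC _ ?_
      rw [mem_closedBall, dist_eq_norm]
      have : ‖x + lam • v - x‖ = ‖lam‖ * ‖v‖ := by simp [norm_smul]
      rw [this, hl, div_mul_cancel₀]
      exact hvn.ne')
    calc ‖fderiv ℂ f x v‖ ≤ C / (R / ‖v‖) := key
      _ = C / R * ‖v‖ := by field_simp

lemma lip_on_ball_of_bound (f : E → ℂ) (hf : Differentiable ℂ f) {x₀ : E} {δ C : ℝ}
    (hδ : 0 < δ) (hC : ∀ y ∈ closedBall x₀ (2*δ), ‖f y‖ ≤ C) :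
    ∀ z ∈ closedBall x₀ δ, ∀ z' ∈ closedBall x₀ δ, ‖f z - f z'‖ ≤ (C/δ) * ‖z - z'‖ := by
  intro z hz z' hz'
  refine Convex.norm_image_sub_le_of_norm_fderiv_le (fun y _ => (hf y))
    (fun y hy => ?_) (convex_closedBall x₀ δ) hz' hz
  refine norm_fderiv_le_of_bound f hf hδ y (fun u hu => hC u ?_)
  rw [mem_closedBall] at *
  calc dist u x₀ ≤ dist u y + dist y x₀ := dist_triangle _ _ _
    _ ≤ δ + δ := add_le_add hu hy
    _ = 2*δ := by ring

lemma fderiv_dir_lip (f : E → ℂ) (hf : Differentiable ℂ f) {x₀ : E} {ρ K : ℝ} (hK : 0 ≤ K)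
    (hρ : 0 ≤ ρ)
    (hlip : ∀ z ∈ closedBall x₀ (ρ+1), ∀ z' ∈ closedBall x₀ (ρ+1), ‖f z - f z'‖ ≤ K * ‖z - z'‖)
    {v : E} (hv : ‖v‖ ≤ 1) :
    ∀ z ∈ closedBall x₀ ρ, ∀ z' ∈ closedBall x₀ ρ,
      ‖fderiv ℂ f z v - fderiv ℂ f z' v‖ ≤ K * ‖z - z'‖ := by
  intro z hz z' hz'
  rcases eq_or_ne v 0 with rfl | hv0
  · simpa using mul_nonneg hK (norm_nonneg (z - z'))
  · have hvn : 0 < ‖v‖ := norm_pos_iff.2 hv0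
    have hr : 0 < 1 / ‖v‖ := by positivity
    have hmem : ∀ (y : E), y ∈ closedBall x₀ ρ → ∀ lam : ℂ, ‖lam‖ = 1/‖v‖ →
        y + lam • v ∈ closedBall x₀ (ρ+1) := by
      intro y hy lam hl
      rw [mem_closedBall] at *
      calc dist (y + lam • v) x₀ ≤ dist (y + lam • v) y + dist y x₀ := dist_triangle _ _ _
        _ ≤ 1 + ρ := by
            refine add_le_add ?_ hy
            rw [dist_eq_norm]
            simp only [add_sub_cancel_left, norm_smul, hl]
            rw [div_mul_cancel₀]
            exact hvn.ne'
        _ = ρ + 1 := by ring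
    have key := norm_fderiv_sub_apply_le f hf hr z z' v (fun lam hl => by
      have h1 := hlip _ (hmem z hz lam hl) _ (hmem z' hz' lam hl)
      have : z + lam • v - (z' + lam • v) = z - z' := by abel
      rw [this] at h1
      exact h1)
    calc ‖fderiv ℂ f z v - fderiv ℂ f z' v‖ ≤ K * ‖z - z'‖ / (1 / ‖v‖) := key
      _ = K * ‖z - z'‖ * ‖v‖ := by field_simp
      _ ≤ K * ‖z - z'‖ * 1 := by
          refine mul_le_mul_of_nonneg_left hv (mul_nonneg hK (norm_nonneg _))
      _ = K * ‖z - z'‖ := by ring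

end helpers

noncomputable def Lclm (n : ℕ) (s : ℝ) : PhaseC n →L[ℂ] PhaseC n :=
  ((ContinuousLinearMap.fst ℂ (Fin n → ℂ) (Fin n → ℂ))
    + (Complex.I + (s:ℂ)) • (ContinuousLinearMap.snd ℂ (Fin n → ℂ) (Fin n → ℂ))).prod
    (ContinuousLinearMap.snd ℂ (Fin n → ℂ) (Fin n → ℂ))

lemma Lclm_apply (n : ℕ) (s : ℝ) (x : PhaseC n) :
    Lclm n s x = (fun l => x.1 l + (Complex.I + (s:ℂ)) * x.2 l, x.2) := by
  unfold Lclm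
  refine Prod.ext ?_ rfl
  funext l
  simp

lemma pSymb_diff (n : ℕ) (a : Fin n → Fin n → (Fin n → ℂ) → ℂ)
    (hhol : ∀ j k, Differentiable ℂ (a j k)) : Differentiable ℂ (pSymb n a) := by
  unfold pSymb
  refine Differentiable.const_mul ?_ _
  refine Differentiable.fun_sum fun j _ => Differentiable.fun_sum fun k _ => ?_
  have h1 : Differentiable ℂ (fun w : PhaseC n => a j k w.1) :=
    (hhol j k).comp differentiable_fst
  have h2 : ∀ i : Fin n, Differentiable ℂ (fun w : PhaseC n => w.2 i) := fun i =>
    (ContinuousLinearMap.proj (R := ℂ) (φ := fun _ : Fin n => ℂ) i).differentiable.comp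
      differentiable_snd
  exact (h1.mul (h2 j)).mul (h2 k)

lemma bSymb_eq (n : ℕ) (a : Fin n → Fin n → (Fin n → ℂ) → ℂ) (s : ℝ) :
    bSymb n a s = fun x => pSymb n a (Lclm n s x) - (1/2) * ∑ j, x.2 j * x.2 j := by
  funext x
  rw [Lclm_apply]
  unfold bSymb pSymb
  simp only [sub_mul, Finset.sum_sub_distrib, ite_mul, one_mul, zero_mul]
  rw [mul_sub]
  congr 1
  congr 1
  refine Finset.sum_congr rfl fun j _ => ?_
  rw [Finset.sum_ite_eq Finset.univ j (fun k => x.2 j * x.2 k)]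
  simp

noncomputable def Qd (n : ℕ) (x : PhaseC n) : PhaseC n →L[ℂ] ℂ :=
  (1/2 : ℂ) • ∑ j, (x.2 j • ((ContinuousLinearMap.proj j).comp
      (ContinuousLinearMap.snd ℂ (Fin n → ℂ) (Fin n → ℂ)))
    + x.2 j • ((ContinuousLinearMap.proj j).comp
      (ContinuousLinearMap.snd ℂ (Fin n → ℂ) (Fin n → ℂ))))

lemma bSymb_hasFDerivAt (n : ℕ) (a : Fin n → Fin n → (Fin n → ℂ) → ℂ)
    (hhol : ∀ j k, Differentiable ℂ (a j k)) (s : ℝ) (x : PhaseC n) :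
    HasFDerivAt (bSymb n a s)
      ((fderiv ℂ (pSymb n a) (Lclm n s x)).comp (Lclm n s) - Qd n x) x := by
  rw [bSymb_eq]
  have h1 : HasFDerivAt (fun y : PhaseC n => pSymb n a (Lclm n s y))
      ((fderiv ℂ (pSymb n a) (Lclm n s x)).comp (Lclm n s)) x :=
    (pSymb_diff n a hhol (Lclm n s x)).hasFDerivAt.comp x (Lclm n s).hasFDerivAt
  have h2 : HasFDerivAt (fun y : PhaseC n => (1/2 : ℂ) * ∑ j, y.2 j * y.2 j) (Qd n x) x := by
    have hc : ∀ j : Fin n, HasFDerivAt (fun y : PhaseC n => y.2 j)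
        ((ContinuousLinearMap.proj j).comp
          (ContinuousLinearMap.snd ℂ (Fin n → ℂ) (Fin n → ℂ))) x :=
      fun j => ((ContinuousLinearMap.proj j).comp
        (ContinuousLinearMap.snd ℂ (Fin n → ℂ) (Fin n → ℂ))).hasFDerivAt
    have hsum := HasFDerivAt.fun_sum (fun j (_ : j ∈ Finset.univ) => (hc j).mul (hc j))
    exact hsum.const_mul (1/2 : ℂ)
  exact h1.sub h2

lemma hamVF_b (n : ℕ) (a : Fin n → Fin n → (Fin n → ℂ) → ℂ)
    (hhol : ∀ j k, Differentiable ℂ (a j k)) (s : ℝ) (x : PhaseC n) :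
    hamVF n (bSymb n a s) x =
      (fun j => (Complex.I + (s:ℂ)) * fderiv ℂ (pSymb n a) (Lclm n s x) (Pi.single j 1, 0)
            + fderiv ℂ (pSymb n a) (Lclm n s x) (0, Pi.single j 1) - x.2 j,
       fun j => - fderiv ℂ (pSymb n a) (Lclm n s x) (Pi.single j 1, 0)) := by
  unfold hamVF
  rw [(bSymb_hasFDerivAt n a hhol s x).fderiv]
  refine Prod.ext ?_ ?_
  · funext j
    simp only [ContinuousLinearMap.coe_sub', Pi.sub_apply, ContinuousLinearMap.coe_comp',
      Function.comp_apply]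
    have hL : Lclm n s (0, Pi.single j 1) =
        (Complex.I + (s:ℂ)) • ((Pi.single j 1 : Fin n → ℂ), (0 : Fin n → ℂ))
          + ((0 : Fin n → ℂ), (Pi.single j 1 : Fin n → ℂ)) := by
      rw [Lclm_apply]
      refine Prod.ext ?_ ?_
      · funext l; simp
      · simp
    have hQ : Qd n x (0, Pi.single j 1) = x.2 j := by
      unfold Qd
      simp only [ContinuousLinearMap.smul_apply, ContinuousLinearMap.sum_apply,
        ContinuousLinearMap.add_apply, ContinuousLinearMap.coe_comp', Function.comp_apply,
        ContinuousLinearMap.proj_apply, ContinuousLinearMap.coe_snd', smul_eq_mul]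
      have hs : (∑ i, (x.2 i * (Pi.single j 1 : Fin n → ℂ) i + x.2 i * (Pi.single j 1 : Fin n → ℂ) i)) = 2 * x.2 j := by
        simp only [Pi.single_apply, mul_ite, mul_one, mul_zero]
        rw [Finset.sum_add_distrib]
        simp [Finset.sum_ite_eq' Finset.univ j]
        ring
      rw [hs]
      ring
    rw [hL, hQ, map_add, map_smul]
    simp only [smul_eq_mul]
  · funext j
    simp only [ContinuousLinearMap.coe_sub', Pi.sub_apply, ContinuousLinearMap.coe_comp',
      Function.comp_apply]
    have hL : Lclm n s ((Pi.single j 1 : Fin n → ℂ), (0 : Fin n → ℂ)) =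
        ((Pi.single j 1 : Fin n → ℂ), (0 : Fin n → ℂ)) := by
      rw [Lclm_apply]
      refine Prod.ext ?_ rfl
      funext l; simp
    have hQ : Qd n x ((Pi.single j 1 : Fin n → ℂ), (0 : Fin n → ℂ)) = 0 := by
      unfold Qd
      simp
    rw [hL, hQ]
    ring

lemma norm_Lclm_le (n : ℕ) {s T : ℝ} (hs : |s| ≤ T) (z : PhaseC n) :
    ‖Lclm n s z‖ ≤ (2 + T) * ‖z‖ := by
  have hT : 0 ≤ T := le_trans (abs_nonneg s) hs
  rw [Lclm_apply, Prod.norm_def]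
  refine max_le ?_ ?_
  · have h1 : ‖(fun l => z.1 l + (Complex.I + (s:ℂ)) * z.2 l : Fin n → ℂ)‖
        ≤ ‖z.1‖ + (1 + T) * ‖z.2‖ := by
      have : (fun l => z.1 l + (Complex.I + (s:ℂ)) * z.2 l : Fin n → ℂ)
          = z.1 + (Complex.I + (s:ℂ)) • z.2 := by
        funext l; simp
      rw [this]
      refine le_trans (norm_add_le _ _) (add_le_add le_rfl ?_)
      rw [norm_smul]
      refine mul_le_mul ?_ le_rfl (norm_nonneg _) (by positivity)
      calc ‖Complex.I + (s:ℂ)‖ ≤ ‖Complex.I‖ + ‖(s:ℂ)‖ := norm_add_le _ _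
        _ = 1 + |s| := by simp [Complex.norm_I]
        _ ≤ 1 + T := by linarith
    calc ‖(fun l => z.1 l + (Complex.I + (s:ℂ)) * z.2 l : Fin n → ℂ)‖
        ≤ ‖z.1‖ + (1 + T) * ‖z.2‖ := h1
      _ ≤ ‖z‖ + (1 + T) * ‖z‖ := by
          refine add_le_add (norm_fst_le z) (mul_le_mul_of_nonneg_left (norm_snd_le z)
            (by positivity))
      _ = (2 + T) * ‖z‖ := by ring
  · calc ‖z.2‖ ≤ ‖z‖ := norm_snd_le z
      _ ≤ (2 + T) * ‖z‖ := by nlinarith [norm_nonneg z]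

lemma lip_main (n : ℕ) (a : Fin n → Fin n → (Fin n → ℂ) → ℂ)
    (hhol : ∀ j k, Differentiable ℂ (a j k)) (T ρ : ℝ) (hT : 0 ≤ T) (hρ : 0 ≤ ρ) :
    ∃ K : NNReal, ∀ s : ℝ, |s| ≤ T →
      LipschitzOnWith K (hamVF n (bSymb n a s)) (closedBall (0 : PhaseC n) ρ) := by
  classical
  set P := pSymb n a with hPdef
  have hP : Differentiable ℂ P := pSymb_diff n a hhol
  set ρ₁ : ℝ := (2 + T) * ρ with hρ₁def
  have hρ₁ : 0 ≤ ρ₁ := by positivity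
  set ρ₂ : ℝ := ρ₁ + 1 with hρ₂def
  have hρ₂ : 0 < ρ₂ := by positivity
  obtain ⟨C, hC⟩ := (isCompact_closedBall (0 : PhaseC n) (2*ρ₂)).exists_bound_of_continuousOn
    hP.continuous.continuousOn
  have hC0 : 0 ≤ C := le_trans (norm_nonneg _)
    (hC 0 (mem_closedBall_self (by positivity)))
  set KP : ℝ := C / ρ₂ with hKPdef
  have hKP0 : 0 ≤ KP := by positivity
  have hlipP : ∀ z ∈ closedBall (0:PhaseC n) ρ₂, ∀ z' ∈ closedBall (0:PhaseC n) ρ₂,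
      ‖P z - P z'‖ ≤ KP * ‖z - z'‖ := lip_on_ball_of_bound P hP hρ₂ hC
  have hdir : ∀ v : PhaseC n, ‖v‖ ≤ 1 → ∀ z ∈ closedBall (0:PhaseC n) ρ₁,
      ∀ z' ∈ closedBall (0:PhaseC n) ρ₁,
      ‖fderiv ℂ P z v - fderiv ℂ P z' v‖ ≤ KP * ‖z - z'‖ := fun v hv =>
    fderiv_dir_lip P hP hKP0 hρ₁ hlipP hv
  set M : ℝ := (2+T) * KP * (2+T) + 1 with hMdef
  have hM0 : 0 ≤ M := by positivity
  refine ⟨M.toNNReal, fun s hs => ?_⟩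
  refine LipschitzOnWith.of_dist_le_mul fun x hx y hy => ?_
  rw [Real.coe_toNNReal M hM0]
  rw [dist_eq_norm, dist_eq_norm]
  rw [hamVF_b n a hhol s x, hamVF_b n a hhol s y]
  -- notation
  set Lx := Lclm n s x with hLx
  set Ly := Lclm n s y with hLy
  have hxρ : ‖x‖ ≤ ρ := mem_closedBall_zero_iff.1 hx
  have hyρ : ‖y‖ ≤ ρ := mem_closedBall_zero_iff.1 hy
  have hLxm : Lx ∈ closedBall (0:PhaseC n) ρ₁ := by
    rw [mem_closedBall_zero_iff]
    calc ‖Lx‖ ≤ (2+T) * ‖x‖ := norm_Lclm_le n hs x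
      _ ≤ (2+T) * ρ := mul_le_mul_of_nonneg_left hxρ (by positivity)
  have hLym : Ly ∈ closedBall (0:PhaseC n) ρ₁ := by
    rw [mem_closedBall_zero_iff]
    calc ‖Ly‖ ≤ (2+T) * ‖y‖ := norm_Lclm_le n hs y
      _ ≤ (2+T) * ρ := mul_le_mul_of_nonneg_left hyρ (by positivity)
  have hdL : ‖Lx - Ly‖ ≤ (2+T) * ‖x - y‖ := by
    rw [hLx, hLy, ← map_sub]
    exact norm_Lclm_le n hs (x - y)
  have hIs : ‖Complex.I + (s:ℂ)‖ ≤ 1 + T := by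
    calc ‖Complex.I + (s:ℂ)‖ ≤ ‖Complex.I‖ + ‖(s:ℂ)‖ := norm_add_le _ _
      _ = 1 + |s| := by simp [Complex.norm_I]
      _ ≤ 1 + T := by linarith
  have hv1 : ∀ j : Fin n, ‖((Pi.single j 1 : Fin n → ℂ), (0 : Fin n → ℂ))‖ ≤ 1 := by
    intro j
    rw [Prod.norm_def]
    refine max_le ?_ (by simp)
    rw [Pi.norm_single]; simp
  have hv2 : ∀ j : Fin n, ‖((0 : Fin n → ℂ), (Pi.single j 1 : Fin n → ℂ))‖ ≤ 1 := by
    intro j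
    rw [Prod.norm_def]
    refine max_le (by simp) ?_
    rw [Pi.norm_single]; simp
  have hD1 : ∀ j : Fin n,
      ‖fderiv ℂ P Lx ((Pi.single j 1 : Fin n → ℂ), (0 : Fin n → ℂ))
       - fderiv ℂ P Ly ((Pi.single j 1 : Fin n → ℂ), (0 : Fin n → ℂ))‖
      ≤ KP * ((2+T) * ‖x - y‖) := fun j =>
    le_trans (hdir _ (hv1 j) Lx hLxm Ly hLym) (mul_le_mul_of_nonneg_left hdL hKP0)
  have hD2 : ∀ j : Fin n,
      ‖fderiv ℂ P Lx ((0 : Fin n → ℂ), (Pi.single j 1 : Fin n → ℂ))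
       - fderiv ℂ P Ly ((0 : Fin n → ℂ), (Pi.single j 1 : Fin n → ℂ))‖
      ≤ KP * ((2+T) * ‖x - y‖) := fun j =>
    le_trans (hdir _ (hv2 j) Lx hLxm Ly hLym) (mul_le_mul_of_nonneg_left hdL hKP0)
  rw [Prod.norm_def]
  refine max_le ?_ ?_
  · -- first components
    refine (pi_norm_le_iff_of_nonneg (by positivity)).2 fun j => ?_
    simp only [Prod.fst_sub, Prod.snd_sub, Pi.sub_apply]
    have herw : ((Complex.I + (s:ℂ)) * fderiv ℂ P Lx ((Pi.single j 1 : Fin n → ℂ), 0)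
          + fderiv ℂ P Lx (0, (Pi.single j 1 : Fin n → ℂ)) - x.2 j)
        - ((Complex.I + (s:ℂ)) * fderiv ℂ P Ly ((Pi.single j 1 : Fin n → ℂ), 0)
          + fderiv ℂ P Ly (0, (Pi.single j 1 : Fin n → ℂ)) - y.2 j)
        = (Complex.I + (s:ℂ)) * (fderiv ℂ P Lx ((Pi.single j 1 : Fin n → ℂ), 0)
            - fderiv ℂ P Ly ((Pi.single j 1 : Fin n → ℂ), 0))
          + ((fderiv ℂ P Lx (0, (Pi.single j 1 : Fin n → ℂ))
            - fderiv ℂ P Ly (0, (Pi.single j 1 : Fin n → ℂ))) - (x.2 j - y.2 j)) := by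
      ring
    rw [herw]
    have hxy2 : ‖x.2 j - y.2 j‖ ≤ ‖x - y‖ := by
      calc ‖x.2 j - y.2 j‖ = ‖(x - y).2 j‖ := rfl
        _ ≤ ‖(x - y).2‖ := norm_le_pi_norm _ j
        _ ≤ ‖x - y‖ := norm_snd_le _
    calc ‖_ + _‖ ≤ ‖(Complex.I + (s:ℂ)) * (fderiv ℂ P Lx ((Pi.single j 1 : Fin n → ℂ), 0)
            - fderiv ℂ P Ly ((Pi.single j 1 : Fin n → ℂ), 0))‖
          + ‖(fderiv ℂ P Lx (0, (Pi.single j 1 : Fin n → ℂ))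
            - fderiv ℂ P Ly (0, (Pi.single j 1 : Fin n → ℂ))) - (x.2 j - y.2 j)‖ :=
        norm_add_le _ _
      _ ≤ (1+T) * (KP * ((2+T) * ‖x - y‖))
          + (KP * ((2+T) * ‖x - y‖) + ‖x - y‖) := by
        refine add_le_add ?_ ?_
        · rw [norm_mul]
          refine mul_le_mul hIs (hD1 j) (norm_nonneg _) (by positivity)
        · exact le_trans (norm_sub_le _ _) (add_le_add (hD2 j) hxy2)
      _ ≤ M * ‖x - y‖ := by
        rw [hMdef]
        nlinarith [norm_nonneg (x - y), mul_nonneg hKP0 (norm_nonneg (x-y)), hT, hKP0]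
  · -- second components
    refine (pi_norm_le_iff_of_nonneg (by positivity)).2 fun j => ?_
    simp only [Prod.fst_sub, Prod.snd_sub, Pi.sub_apply]
    have herw : (-(fderiv ℂ P Lx ((Pi.single j 1 : Fin n → ℂ), 0)))
          - (-(fderiv ℂ P Ly ((Pi.single j 1 : Fin n → ℂ), 0)))
        = -((fderiv ℂ P Lx ((Pi.single j 1 : Fin n → ℂ), 0))
          - (fderiv ℂ P Ly ((Pi.single j 1 : Fin n → ℂ), 0))) := by ring
    rw [herw, norm_neg]
    calc ‖_‖ ≤ KP * ((2+T) * ‖x - y‖) := hD1 j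
      _ ≤ M * ‖x - y‖ := by
        rw [hMdef]
        nlinarith [norm_nonneg (x - y), mul_nonneg hKP0 (norm_nonneg (x-y)), hT, hKP0,
          mul_nonneg (mul_nonneg hKP0 (norm_nonneg (x-y))) hT,
          mul_nonneg (mul_nonneg (mul_nonneg hKP0 (norm_nonneg (x-y))) hT) hT]


/-- If `expP` is the (complete) flow of `H_p` and `Rfl s` the flow of the time-dependent
Hamiltonian `b(s,·)`, then `R_s = κ ∘ exp(-sH_{p₀}) ∘ exp(sH_p) ∘ κ⁻¹`. -/
theorem stmt_3 (n : ℕ) (a : Fin n → Fin n → (Fin n → ℂ) → ℂ)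
    (hsym : ∀ j k, a j k = a k j)
    (hhol : ∀ j k, Differentiable ℂ (a j k))
    (expP : ℝ → PhaseC n → PhaseC n) (Rfl : ℝ → PhaseC n → PhaseC n)
    (hexpP0 : ∀ w, expP 0 w = w)
    (hexpP : ∀ t w, HasDerivAt (fun t => expP t w) (hamVF n (pSymb n a) (expP t w)) t)
    (hR0 : ∀ w, Rfl 0 w = w)
    (hR : ∀ s w, HasDerivAt (fun s => Rfl s w) (hamVF n (bSymb n a s) (Rfl s w)) s) :
    ∀ (s : ℝ) (w : PhaseC n),
      Rfl s w = kappaMap n (freeFlow n (-s) (expP s (kappaInv n w))) := by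
  intro S w
  set u₀ : PhaseC n := kappaInv n w with hu₀
  set E : ℝ → PhaseC n := fun t => expP t u₀ with hEdef
  have hE : ∀ t, HasDerivAt E (hamVF n (pSymb n a) (E t)) t := fun t => hexpP t u₀
  set g : ℝ → PhaseC n := fun t =>
    ((fun j => (E t).1 j - ((t:ℂ) + Complex.I) * (E t).2 j : Fin n → ℂ), (E t).2) with hgdef
  have hg_eq : ∀ t : ℝ, kappaMap n (freeFlow n (-t) (E t)) = g t := by
    intro t
    unfold kappaMap freeFlow
    refine Prod.ext ?_ rfl
    funext j
    show (E t).1 j + ((-t : ℝ) : ℂ) * (E t).2 j - Complex.I * (E t).2 j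
        = (E t).1 j - ((t:ℂ) + Complex.I) * (E t).2 j
    push_cast
    ring
  -- component derivatives of E
  have hE1 : ∀ (t : ℝ) (j : Fin n), HasDerivAt (fun u => (E u).1 j)
      (fderiv ℂ (pSymb n a) (E t) (0, Pi.single j 1)) t := by
    intro t j
    have hclm := (((ContinuousLinearMap.proj (R := ℂ) (φ := fun _ : Fin n => ℂ) j).comp
      (ContinuousLinearMap.fst ℂ (Fin n → ℂ) (Fin n → ℂ))).restrictScalars
        ℝ).hasFDerivAt (x := E t)
    have := hclm.comp_hasDerivAt t (hE t)
    simp [hamVF] at this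
    exact this
  have hE2 : ∀ (t : ℝ) (j : Fin n), HasDerivAt (fun u => (E u).2 j)
      (-(fderiv ℂ (pSymb n a) (E t) (Pi.single j 1, 0))) t := by
    intro t j
    have hclm := (((ContinuousLinearMap.proj (R := ℂ) (φ := fun _ : Fin n => ℂ) j).comp
      (ContinuousLinearMap.snd ℂ (Fin n → ℂ) (Fin n → ℂ))).restrictScalars
        ℝ).hasFDerivAt (x := E t)
    have := hclm.comp_hasDerivAt t (hE t)
    simp [hamVF] at this
    exact this
  -- g solves the b-Hamilton equations
  have hgdA : ∀ t, HasDerivAt g (hamVF n (bSymb n a t) (g t)) t := by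
    intro t
    have ht1 : HasDerivAt (fun u : ℝ => ((u:ℂ) + Complex.I)) 1 t := by
      simpa using (Complex.ofRealCLM.hasDerivAt (x := t)).add_const Complex.I
    have h1 : ∀ j : Fin n, HasDerivAt (fun u => (E u).1 j - ((u:ℂ) + Complex.I) * (E u).2 j)
        (fderiv ℂ (pSymb n a) (E t) (0, Pi.single j 1)
          - (1 * (E t).2 j + ((t:ℂ) + Complex.I)
              * (-(fderiv ℂ (pSymb n a) (E t) (Pi.single j 1, 0))))) t :=
      fun j => (hE1 t j).sub (ht1.mul (hE2 t j))
    have h2 : HasDerivAt g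
        ((fun j => fderiv ℂ (pSymb n a) (E t) (0, Pi.single j 1)
          - (1 * (E t).2 j + ((t:ℂ) + Complex.I)
              * (-(fderiv ℂ (pSymb n a) (E t) (Pi.single j 1, 0)))) : Fin n → ℂ),
         (fun j => -(fderiv ℂ (pSymb n a) (E t) (Pi.single j 1, 0)) : Fin n → ℂ)) t :=
      (hasDerivAt_pi.mpr h1).prodMk (hasDerivAt_pi.mpr (fun j => hE2 t j))
    have hL : Lclm n t (g t) = E t := by
      rw [Lclm_apply]
      refine Prod.ext ?_ rfl
      funext l
      show (E t).1 l - ((t:ℂ) + Complex.I) * (E t).2 l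
          + (Complex.I + (t:ℂ)) * (E t).2 l = (E t).1 l
      ring
    rw [hamVF_b n a hhol t (g t), hL]
    have hveq : ((fun j => (Complex.I + (t:ℂ)) * fderiv ℂ (pSymb n a) (E t) (Pi.single j 1, 0)
          + fderiv ℂ (pSymb n a) (E t) (0, Pi.single j 1) - (g t).2 j : Fin n → ℂ),
        (fun j => -fderiv ℂ (pSymb n a) (E t) (Pi.single j 1, 0) : Fin n → ℂ))
        = ((fun j => fderiv ℂ (pSymb n a) (E t) (0, Pi.single j 1)
          - (1 * (E t).2 j + ((t:ℂ) + Complex.I)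
              * (-(fderiv ℂ (pSymb n a) (E t) (Pi.single j 1, 0)))) : Fin n → ℂ),
         (fun j => -(fderiv ℂ (pSymb n a) (E t) (Pi.single j 1, 0)) : Fin n → ℂ)) := by
      refine Prod.ext ?_ rfl
      funext j
      show (Complex.I + (t:ℂ)) * fderiv ℂ (pSymb n a) (E t) (Pi.single j 1, 0)
          + fderiv ℂ (pSymb n a) (E t) (0, Pi.single j 1) - (E t).2 j
        = fderiv ℂ (pSymb n a) (E t) (0, Pi.single j 1)
          - (1 * (E t).2 j + ((t:ℂ) + Complex.I)
              * (-(fderiv ℂ (pSymb n a) (E t) (Pi.single j 1, 0))))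
      ring
    rw [hveq]
    exact h2
  -- the two solutions
  set f : ℝ → PhaseC n := fun t => Rfl t w with hfdef
  have hfd : ∀ t, HasDerivAt f (hamVF n (bSymb n a t) (f t)) t := fun t => hR t w
  have hfc : Continuous f := continuous_iff_continuousAt.mpr fun t => (hfd t).continuousAt
  have hgc : Continuous g := continuous_iff_continuousAt.mpr fun t => (hgdA t).continuousAt
  set T : ℝ := |S| + 1 with hTdef
  have hT0 : 0 ≤ T := by positivity
  obtain ⟨Cf, hCf⟩ := (isCompact_Icc (a := -T) (b := T)).exists_bound_of_continuousOn
    hfc.continuousOn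
  obtain ⟨Cg, hCg⟩ := (isCompact_Icc (a := -T) (b := T)).exists_bound_of_continuousOn
    hgc.continuousOn
  set ρ : ℝ := max (max Cf Cg) 0 with hρdef
  obtain ⟨K, hK⟩ := lip_main n a hhol T ρ hT0 (le_max_right _ _)
  set sset : ℝ → Set (PhaseC n) := fun t =>
    if t ∈ Set.Icc (-T) T then Metric.closedBall (0 : PhaseC n) ρ else (∅ : Set (PhaseC n))
    with hsset
  have hv : ∀ t, LipschitzOnWith K (fun x => hamVF n (bSymb n a t) x) (sset t) := by
    intro t
    by_cases h : t ∈ Set.Icc (-T) T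
    · have habs : |t| ≤ T := abs_le.mpr ⟨h.1, h.2⟩
      have := hK t habs
      rw [hsset]
      simpa [h] using this
    · rw [hsset]
      simp only [h, if_false]
      exact lipschitzOnWith_empty _ _
  have heq0 : f 0 = g 0 := by
    have hE0 : E 0 = u₀ := hexpP0 u₀
    rw [hfdef, hgdef]
    simp only
    rw [hR0 w, hE0, hu₀]
    unfold kappaInv
    refine Prod.ext ?_ rfl
    funext j
    show w.1 j = w.1 j + Complex.I * w.2 j - (((0:ℝ):ℂ) + Complex.I) * w.2 j
    push_cast
    ring
  have hmemf : ∀ t ∈ Set.Ioo (-T) T, f t ∈ sset t := by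
    intro t ht
    have htI : t ∈ Set.Icc (-T) T := Set.mem_Icc_of_Ioo ht
    rw [hsset]
    simp only [htI, if_true]
    rw [mem_closedBall_zero_iff]
    exact le_trans (hCf t htI) (le_trans (le_max_left _ _) (le_max_left _ _))
  have hmemg : ∀ t ∈ Set.Ioo (-T) T, g t ∈ sset t := by
    intro t ht
    have htI : t ∈ Set.Icc (-T) T := Set.mem_Icc_of_Ioo ht
    rw [hsset]
    simp only [htI, if_true]
    rw [mem_closedBall_zero_iff]
    exact le_trans (hCg t htI) (le_trans (le_max_right _ _) (le_max_left _ _))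
  have h0mem : (0:ℝ) ∈ Set.Ioo (-T) T := by
    constructor
    · have := abs_nonneg S; rw [hTdef]; linarith
    · have := abs_nonneg S; rw [hTdef]; linarith
  have huniq := ODE_solution_unique_of_mem_Icc (fun t _ => hv t) h0mem hfc.continuousOn
    (fun t _ => hfd t) hmemf hgc.continuousOn (fun t _ => hgdA t) hmemg heq0
  have hS : S ∈ Set.Icc (-T) T := by
    constructor
    · have := neg_abs_le S; rw [hTdef]; linarith
    · have := le_abs_self S; rw [hTdef]; linarith
  have hfin : f S = g S := huniq hS
  rw [show kappaMap n (freeFlow n (-S) (expP S (kappaInv n w))) = g S from hg_eq S]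
  exact hfin
end

section
/- Let ξ ∈ ℂⁿ and let ρ₊ ≥ 0. There exists δ > 0 (any sufficiently small δ works) and a constant such that ∫_{ℝⁿ} exp((2|Im ξ|·|x-y| - |x-y|² - δ|η+ξ|²/⟨η+ξ⟩)/(2h)) dη ≤ Const·exp((2|Im ξ|·|x-y| - |x-y|² - δ|Im ξ|²/⟨Im ξ⟩)/(2h))·h^{n/2}·C for all x, y ∈ ℝⁿ and h ∈ (0,1], by splitting the η-integral into the regions {|η + Re ξ| ≥ |Im ξ|} and {|η + Re ξ| ≤ |Im ξ|}. Consequently ∫_{ℝⁿ×ℝⁿ} exp((2|Im ξ|·|x-y| - |x-y|² - δ|η+ξ|²/⟨η+ξ⟩)/(2h)) dy dη ≤ C' exp((|Im ξ|² - δ|Im ξ|²/(2⟨Im ξ⟩))/(2h)) for h small. -/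
open MeasureTheory

noncomputable def ψ (t : ℝ) : ℝ := t ^ 2 / Real.sqrt (1 + t ^ 2)

lemma psi_nonneg (t : ℝ) : 0 ≤ ψ t := by unfold ψ; positivity

lemma psi_ge (s : ℝ) : s - 1 ≤ ψ s := by
  unfold ψ
  have hw0 : 0 < Real.sqrt (1 + s ^ 2) := Real.sqrt_pos.2 (by positivity)
  rcases le_or_gt s 1 with h | h
  · have : (0:ℝ) ≤ s ^ 2 / Real.sqrt (1 + s ^ 2) := by positivity
    linarith
  · have hwle : Real.sqrt (1 + s ^ 2) ≤ 1 + s := by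
      rw [show (1:ℝ) + s = Real.sqrt ((1+s)^2) from (Real.sqrt_sq (by linarith)).symm]
      exact Real.sqrt_le_sqrt (by nlinarith)
    rw [le_div_iff₀ hw0]
    nlinarith [hwle]

lemma keyIneq (b s : ℝ) (hb : 0 ≤ b) :
    b / Real.sqrt (1 + b) + (1 / (2 * Real.sqrt (1 + b))) * ψ s
      ≤ (s ^ 2 + b) / Real.sqrt (1 + s ^ 2 + b) := by
  have hu0 : 0 < Real.sqrt (1 + b) := Real.sqrt_pos.2 (by linarith)
  have hw0 : 0 < Real.sqrt (1 + s ^ 2) := Real.sqrt_pos.2 (by positivity)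
  have hv0 : 0 < Real.sqrt (1 + s ^ 2 + b) := Real.sqrt_pos.2 (by positivity)
  set u := Real.sqrt (1 + b) with hu
  set w := Real.sqrt (1 + s ^ 2) with hw
  set v := Real.sqrt (1 + s ^ 2 + b) with hv
  have hu2 : u ^ 2 = 1 + b := Real.sq_sqrt (by linarith)
  have hw2 : w ^ 2 = 1 + s ^ 2 := Real.sq_sqrt (by positivity)
  have hv2 : v ^ 2 = 1 + s ^ 2 + b := Real.sq_sqrt (by positivity)
  have hvuw : v ≤ u * w := by
    have h1 : 1 + s ^ 2 + b ≤ (1 + b) * (1 + s ^ 2) := by nlinarith [sq_nonneg s]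
    calc v ≤ Real.sqrt ((1 + b) * (1 + s ^ 2)) := Real.sqrt_le_sqrt h1
    _ = u * w := Real.sqrt_mul (by linarith) _
  have h2 : b * v ≤ (s ^ 2 / 2 + b) * u := by
    have hsq : (b * v) ^ 2 ≤ ((s ^ 2 / 2 + b) * u) ^ 2 := by
      have e1 : ((s ^ 2 / 2 + b) * u) ^ 2 = (s ^ 4 / 4 + b * s ^ 2 + b ^ 2) * (1 + b) := by
        rw [mul_pow, hu2]; ring
      have e2 : (b * v) ^ 2 = b ^ 2 * (1 + s ^ 2 + b) := by rw [mul_pow, hv2]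
      rw [e1, e2]
      nlinarith [sq_nonneg (s ^ 2), mul_nonneg hb (sq_nonneg s), mul_nonneg hb (sq_nonneg (s ^ 2))]
    exact le_of_pow_le_pow_left₀ two_ne_zero (by positivity) hsq
  have step : (1 / (2 * u)) * ψ s ≤ s ^ 2 / (2 * v) := by
    have heq : (1 / (2 * u)) * ψ s = s ^ 2 / (2 * (u * w)) := by
      unfold ψ; rw [← hw]; rw [div_mul_div_comm, one_mul]; ring_nf
    rw [heq]
    apply div_le_div_of_nonneg_left (by positivity) (by positivity)
    linarith
  have main : b / u + s ^ 2 / (2 * v) ≤ (s ^ 2 + b) / v := by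
    rw [div_add_div _ _ (ne_of_gt hu0) (by positivity), div_le_div_iff₀ (by positivity) hv0]
    nlinarith [mul_le_mul_of_nonneg_right h2 (by positivity : (0:ℝ) ≤ 2 * v), sq_nonneg s,
      mul_pos hu0 hv0]
  linarith

lemma psi_scale {s h : ℝ} (hs : 0 ≤ s) (h0 : 0 < h) (h1 : h ≤ 1) :
    ψ s ≤ ψ (Real.sqrt h * s) / h := by
  unfold ψ
  have hsq : (Real.sqrt h * s) ^ 2 = h * s ^ 2 := by
    rw [mul_pow, Real.sq_sqrt h0.le]
  rw [hsq]
  have h2 : h * s ^ 2 / Real.sqrt (1 + h * s ^ 2) / h = s ^ 2 / Real.sqrt (1 + h * s ^ 2) := by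
    field_simp
  rw [h2]
  apply div_le_div_of_nonneg_left (by positivity)
    (Real.sqrt_pos.2 (by nlinarith [sq_nonneg s]))
  exact Real.sqrt_le_sqrt (by nlinarith [sq_nonneg s])

lemma continuous_psi : Continuous ψ := by
  unfold ψ
  apply Continuous.div (by continuity) (by continuity)
  intro t
  exact ne_of_gt (Real.sqrt_pos.2 (by positivity))

lemma integrable_exp_neg_norm (n : ℕ) {c : ℝ} (hc : 0 < c) :
    Integrable (fun u : EuclideanSpace ℝ (Fin n) => Real.exp (-(c * ‖u‖))) := by
  have hnr : (Module.finrank ℝ (EuclideanSpace ℝ (Fin n)) : ℝ) < ((n + 1 : ℕ) : ℝ) := by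
    rw [finrank_euclideanSpace_fin]; exact_mod_cast Nat.lt_succ_self n
  have hint := integrable_one_add_norm
    (μ := (volume : Measure (EuclideanSpace ℝ (Fin n)))) hnr
  set c' : ℝ := c / (n + 1) with hc'def
  have hc'0 : 0 < c' := by positivity
  set M : ℝ := (1 + 1 / c') ^ (n + 1) with hMdef
  have hM0 : 0 < M := by positivity
  refine (hint.const_mul M).mono' ?_ ?_
  · exact (Real.continuous_exp.comp (continuous_const.mul continuous_norm).neg).aestronglyMeasurable
  · filter_upwards with u
    have ht : 0 ≤ ‖u‖ := norm_nonneg u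
    set t := ‖u‖ with htdef
    rw [Real.norm_eq_abs, abs_of_pos (Real.exp_pos _)]
    have key : (1 + t) ^ (n + 1) ≤ M * Real.exp (c * t) := by
      have h1 : 1 + t ≤ (1 + 1 / c') * Real.exp (c' * t) := by
        have e1 : c' * t + 1 ≤ Real.exp (c' * t) := Real.add_one_le_exp _
        have e2 : (0:ℝ) ≤ c' * t := by positivity
        have e3 : (1:ℝ) ≤ Real.exp (c' * t) := by nlinarith
        have e4 : t ≤ (1 / c') * Real.exp (c' * t) := by
          rw [div_mul_eq_mul_div, le_div_iff₀ hc'0]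
          nlinarith
        nlinarith
      calc (1 + t) ^ (n + 1) ≤ ((1 + 1 / c') * Real.exp (c' * t)) ^ (n + 1) :=
            pow_le_pow_left₀ (by positivity) h1 _
        _ = M * (Real.exp (c' * t)) ^ (n + 1) := by rw [mul_pow]
        _ = M * Real.exp (c * t) := by
            rw [← Real.exp_nat_mul]
            congr 1
            rw [hc'def]
            push_cast
            field_simp
    have hpos : (0:ℝ) < 1 + t := by linarith
    rw [Real.rpow_neg hpos.le]
    rw [Real.rpow_natCast, ← div_eq_mul_inv, le_div_iff₀ (by positivity)]
    have hmul : Real.exp (-(c * t)) * Real.exp (c * t) = 1 := by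
      rw [← Real.exp_add]; simp
    nlinarith [mul_le_mul_of_nonneg_left key (Real.exp_pos (-(c * t))).le, hmul]

lemma integrable_exp_psi (n : ℕ) {c : ℝ} (hc : 0 < c) :
    Integrable (fun u : EuclideanSpace ℝ (Fin n) => Real.exp (-(c * ψ ‖u‖))) := by
  refine (((integrable_exp_neg_norm n hc).const_mul (Real.exp c))).mono' ?_ ?_
  · exact (Real.continuous_exp.comp
      (continuous_const.mul (continuous_psi.comp continuous_norm)).neg).aestronglyMeasurable
  · filter_upwards with u
    rw [Real.norm_eq_abs, abs_of_pos (Real.exp_pos _), ← Real.exp_add]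
    apply Real.exp_le_exp.2
    have := psi_ge ‖u‖
    nlinarith [this, hc.le]

lemma integrable_gauss_shell (n : ℕ) (m : ℝ) :
    Integrable (fun z : EuclideanSpace ℝ (Fin n) => Real.exp (-((‖z‖ - m) ^ 2) / 2)) := by
  refine ((integrable_exp_neg_norm n one_pos).const_mul
    (Real.exp ((2 * m + 1) / 2))).mono' ?_ ?_
  · exact (Real.continuous_exp.comp
      (((continuous_norm.sub continuous_const).pow 2).neg.div_const 2)).aestronglyMeasurable
  · filter_upwards with z
    rw [Real.norm_eq_abs, abs_of_pos (Real.exp_pos _), ← Real.exp_add]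
    apply Real.exp_le_exp.2
    nlinarith [sq_nonneg (‖z‖ - (m + 1))]

lemma scale_bound (n : ℕ) {c h : ℝ} (hc : 0 < c) (h0 : 0 < h) (h1 : h ≤ 1) :
    ∫ η : EuclideanSpace ℝ (Fin n), Real.exp (-(c * ψ ‖η‖) / h)
      ≤ h ^ ((n : ℝ) / 2) * ∫ u : EuclideanSpace ℝ (Fin n), Real.exp (-(c * ψ ‖u‖)) := by
  have hR : 0 < Real.sqrt h := Real.sqrt_pos.2 h0
  have hcomp := Measure.integral_comp_smul_of_nonneg (volume : Measure (EuclideanSpace ℝ (Fin n)))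
      (fun η : EuclideanSpace ℝ (Fin n) => Real.exp (-(c * ψ ‖η‖) / h)) (Real.sqrt h)
      (hR := hR.le)
  rw [finrank_euclideanSpace_fin] at hcomp
  have hpow : (Real.sqrt h) ^ n = h ^ ((n : ℝ) / 2) := by
    rw [← Real.rpow_natCast (Real.sqrt h) n, Real.sqrt_eq_rpow, ← Real.rpow_mul h0.le]
    congr 1
    ring
  have e : (∫ η : EuclideanSpace ℝ (Fin n), Real.exp (-(c * ψ ‖η‖) / h))
      = (Real.sqrt h) ^ n • ∫ x : EuclideanSpace ℝ (Fin n),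
          Real.exp (-(c * ψ ‖Real.sqrt h • x‖) / h) := by
    rw [hcomp, smul_smul, mul_inv_cancel₀ (by positivity), one_smul]
  rw [e, smul_eq_mul, hpow]
  apply mul_le_mul_of_nonneg_left ?_ (by positivity)
  apply integral_mono_of_nonneg
  · filter_upwards with u using (Real.exp_pos _).le
  · exact integrable_exp_psi n hc
  · filter_upwards with u
    have hn : ‖Real.sqrt h • u‖ = Real.sqrt h * ‖u‖ := by
      rw [norm_smul, Real.norm_eq_abs, abs_of_pos hR]
    rw [hn]
    apply Real.exp_le_exp.2
    have h2 := mul_le_mul_of_nonneg_left (psi_scale (norm_nonneg u) h0 h1) hc.le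
    rw [neg_div, neg_le_neg_iff, mul_div_assoc]
    exact h2

set_option maxHeartbeats 1000000 in
/-- The Gaussian estimate obtained by splitting the `η`-integral into the regions
`{|η + Re ξ| ≥ |Im ξ|}` and `{|η + Re ξ| ≤ |Im ξ|}`, and its consequence for the
double `(y,η)`-integral.  Here `⟨w⟩ = √(1+|w|²)` and `|η+ξ|² = |η+Re ξ|² + |Im ξ|²`. -/
theorem stmt_6 (n : ℕ) (Reξ Imξ : EuclideanSpace ℝ (Fin n)) :
    ∃ δ > (0 : ℝ), ∃ K > (0 : ℝ),
      (∀ x y : EuclideanSpace ℝ (Fin n), ∀ h ∈ Set.Ioc (0 : ℝ) 1,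
        (∫ η : EuclideanSpace ℝ (Fin n),
            Real.exp ((2 * ‖Imξ‖ * ‖x - y‖ - ‖x - y‖ ^ 2
              - δ * (‖η + Reξ‖ ^ 2 + ‖Imξ‖ ^ 2)
                  / Real.sqrt (1 + ‖η + Reξ‖ ^ 2 + ‖Imξ‖ ^ 2)) / (2 * h)))
          ≤ K * Real.exp ((2 * ‖Imξ‖ * ‖x - y‖ - ‖x - y‖ ^ 2
              - δ * ‖Imξ‖ ^ 2 / Real.sqrt (1 + ‖Imξ‖ ^ 2)) / (2 * h))
            * h ^ ((n : ℝ) / 2))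
      ∧ ∃ K' > (0 : ℝ), ∃ h₀ > (0 : ℝ),
          ∀ x : EuclideanSpace ℝ (Fin n), ∀ h ∈ Set.Ioo (0 : ℝ) h₀,
            (∫ p : EuclideanSpace ℝ (Fin n) × EuclideanSpace ℝ (Fin n),
                Real.exp ((2 * ‖Imξ‖ * ‖x - p.1‖ - ‖x - p.1‖ ^ 2
                  - δ * (‖p.2 + Reξ‖ ^ 2 + ‖Imξ‖ ^ 2)
                      / Real.sqrt (1 + ‖p.2 + Reξ‖ ^ 2 + ‖Imξ‖ ^ 2)) / (2 * h)))
              ≤ K' * Real.exp ((‖Imξ‖ ^ 2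
                  - δ * ‖Imξ‖ ^ 2 / (2 * Real.sqrt (1 + ‖Imξ‖ ^ 2))) / (2 * h)) := by
  set b : ℝ := ‖Imξ‖ ^ 2 with hbdef
  have hb : 0 ≤ b := sq_nonneg _
  have hsb : 0 < Real.sqrt (1 + b) := Real.sqrt_pos.2 (by linarith)
  set c : ℝ := 1 / (4 * Real.sqrt (1 + b)) with hcdef
  have hc : 0 < c := by positivity
  set a : ℝ := b / Real.sqrt (1 + b) with hadef
  have ha : 0 ≤ a := by positivity
  set K₀ : ℝ := ∫ u : EuclideanSpace ℝ (Fin n), Real.exp (-(c * ψ ‖u‖)) with hK₀def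
  have hK₀ : 0 ≤ K₀ := integral_nonneg fun u => (Real.exp_pos _).le
  -- the key pointwise exponent inequality
  have hexp : ∀ s : ℝ, 0 ≤ s → a + 2 * c * ψ s ≤ (s ^ 2 + b) / Real.sqrt (1 + s ^ 2 + b) := by
    intro s hs
    have := keyIneq b s hb
    have h2c : 1 / (2 * Real.sqrt (1 + b)) = 2 * c := by rw [hcdef]; ring
    rw [h2c] at this
    linarith
  -- measurability of the translated ψ-exponential
  have hmeas : ∀ (t : ℝ),
      Continuous (fun η : EuclideanSpace ℝ (Fin n) => Real.exp (-(c * ψ ‖η‖) / t)) := by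
    intro t
    exact Real.continuous_exp.comp
      (((continuous_const.mul (continuous_psi.comp continuous_norm)).neg).div_const t)
  -- integrability of the h-dependent ψ-exponential, h ∈ (0,1]
  have hFint : ∀ (h : ℝ), 0 < h → h ≤ 1 →
      Integrable (fun η : EuclideanSpace ℝ (Fin n) => Real.exp (-(c * ψ ‖η‖) / h)) := by
    intro h h0 h1
    refine (integrable_exp_psi n hc).mono' (hmeas h).aestronglyMeasurable ?_
    filter_upwards with u
    rw [Real.norm_eq_abs, abs_of_pos (Real.exp_pos _)]
    apply Real.exp_le_exp.2
    rw [neg_div]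
    apply neg_le_neg
    rw [le_div_iff₀ h0]
    have hψu := psi_nonneg ‖u‖
    nlinarith [mul_nonneg (mul_nonneg hc.le hψu) (sub_nonneg.2 h1)]
  refine ⟨1, one_pos, K₀ + 1, by linarith, ?_, ?_⟩
  · -- Part 1
    intro x y h hh
    obtain ⟨h0, h1⟩ := hh
    set A : ℝ := 2 * ‖Imξ‖ * ‖x - y‖ - ‖x - y‖ ^ 2 with hAdef
    have h2h : (0 : ℝ) < 2 * h := by linarith
    have hpt : ∀ η : EuclideanSpace ℝ (Fin n),
        Real.exp ((A - 1 * (‖η + Reξ‖ ^ 2 + b) / Real.sqrt (1 + ‖η + Reξ‖ ^ 2 + b)) / (2 * h))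
          ≤ Real.exp ((A - 1 * b / Real.sqrt (1 + b)) / (2 * h))
            * Real.exp (-(c * ψ ‖η + Reξ‖) / h) := by
      intro η
      rw [← Real.exp_add]
      apply Real.exp_le_exp.2
      have hk := hexp ‖η + Reξ‖ (norm_nonneg _)
      have hnum : A - 1 * (‖η + Reξ‖ ^ 2 + b) / Real.sqrt (1 + ‖η + Reξ‖ ^ 2 + b)
          ≤ A - 1 * b / Real.sqrt (1 + b) - 2 * c * ψ ‖η + Reξ‖ := by
        rw [one_mul, one_mul, ← hadef]
        linarith
      calc (A - 1 * (‖η + Reξ‖ ^ 2 + b) / Real.sqrt (1 + ‖η + Reξ‖ ^ 2 + b)) / (2 * h)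
          ≤ (A - 1 * b / Real.sqrt (1 + b) - 2 * c * ψ ‖η + Reξ‖) / (2 * h) := by
            rw [div_eq_mul_inv, div_eq_mul_inv]
            exact mul_le_mul_of_nonneg_right hnum (by positivity)
        _ = (A - 1 * b / Real.sqrt (1 + b)) / (2 * h) + -(c * ψ ‖η + Reξ‖) / h := by
            field_simp
            ring
    have hFtr : Integrable
        (fun η : EuclideanSpace ℝ (Fin n) => Real.exp (-(c * ψ ‖η + Reξ‖) / h)) :=
      (hFint h h0 h1).comp_add_right Reξ
    calc (∫ η : EuclideanSpace ℝ (Fin n),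
            Real.exp ((A - 1 * (‖η + Reξ‖ ^ 2 + b) / Real.sqrt (1 + ‖η + Reξ‖ ^ 2 + b)) / (2 * h)))
        ≤ ∫ η : EuclideanSpace ℝ (Fin n),
            Real.exp ((A - 1 * b / Real.sqrt (1 + b)) / (2 * h))
              * Real.exp (-(c * ψ ‖η + Reξ‖) / h) := by
          apply integral_mono_of_nonneg
          · filter_upwards with η using (Real.exp_pos _).le
          · exact hFtr.const_mul _
          · filter_upwards with η using hpt η
      _ = Real.exp ((A - 1 * b / Real.sqrt (1 + b)) / (2 * h))
            * ∫ η : EuclideanSpace ℝ (Fin n), Real.exp (-(c * ψ ‖η + Reξ‖) / h) :=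
          integral_const_mul _ _
      _ = Real.exp ((A - 1 * b / Real.sqrt (1 + b)) / (2 * h))
            * ∫ η : EuclideanSpace ℝ (Fin n), Real.exp (-(c * ψ ‖η‖) / h) := by
          rw [integral_add_right_eq_self (fun η : EuclideanSpace ℝ (Fin n) =>
            Real.exp (-(c * ψ ‖η‖) / h)) Reξ]
      _ ≤ Real.exp ((A - 1 * b / Real.sqrt (1 + b)) / (2 * h)) * (h ^ ((n : ℝ) / 2) * K₀) := by
          apply mul_le_mul_of_nonneg_left (scale_bound n hc h0 h1) (Real.exp_pos _).le
      _ ≤ (K₀ + 1) * Real.exp ((A - 1 * b / Real.sqrt (1 + b)) / (2 * h)) * h ^ ((n : ℝ) / 2) := by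
          have h1' : (0:ℝ) ≤ h ^ ((n : ℝ) / 2) := by positivity
          nlinarith [Real.exp_pos ((A - 1 * b / Real.sqrt (1 + b)) / (2 * h)),
            mul_nonneg h1' hK₀]
  · -- Part 2
    set m : ℝ := ‖Imξ‖ with hmdef
    have hm : 0 ≤ m := norm_nonneg _
    set K₁ : ℝ := ∫ z : EuclideanSpace ℝ (Fin n), Real.exp (-((‖z‖ - m) ^ 2) / 2) with hK₁def
    have hK₁ : 0 ≤ K₁ := integral_nonneg fun z => (Real.exp_pos _).le
    set K₂ : ℝ := ∫ u : EuclideanSpace ℝ (Fin n), Real.exp (-(c * ψ ‖u‖) / 1) with hK₂def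
    have hK₂ : 0 ≤ K₂ := integral_nonneg fun z => (Real.exp_pos _).le
    refine ⟨K₁ * K₂ + 1, by nlinarith, 1, one_pos, ?_⟩
    intro x h hh
    obtain ⟨h0, h1'⟩ := hh
    have h1 : h ≤ 1 := h1'.le
    have h2h : (0 : ℝ) < 2 * h := by linarith
    -- pointwise bound on the double integrand
    have hpt : ∀ p : EuclideanSpace ℝ (Fin n) × EuclideanSpace ℝ (Fin n),
        Real.exp ((2 * m * ‖x - p.1‖ - ‖x - p.1‖ ^ 2
            - 1 * (‖p.2 + Reξ‖ ^ 2 + b) / Real.sqrt (1 + ‖p.2 + Reξ‖ ^ 2 + b)) / (2 * h))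
          ≤ Real.exp ((b - a) / (2 * h))
            * (Real.exp (-((‖x - p.1‖ - m) ^ 2) / 2) * Real.exp (-(c * ψ ‖p.2 + Reξ‖) / 1)) := by
      intro p
      rw [← Real.exp_add, ← Real.exp_add]
      apply Real.exp_le_exp.2
      set t : ℝ := ‖x - p.1‖ with htdef
      have hts : 0 ≤ t := norm_nonneg _
      set s : ℝ := ‖p.2 + Reξ‖ with hsdef
      have hss : 0 ≤ s := norm_nonneg _
      have hk := hexp s hss
      have hψ : 0 ≤ ψ s := psi_nonneg s
      have hnum : 2 * m * t - t ^ 2 - 1 * (s ^ 2 + b) / Real.sqrt (1 + s ^ 2 + b)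
          ≤ b - a - (t - m) ^ 2 - 2 * c * ψ s := by
        rw [one_mul]
        have : 2 * m * t - t ^ 2 = b - (t - m) ^ 2 := by rw [hbdef, hmdef]; ring
        linarith
      calc (2 * m * t - t ^ 2 - 1 * (s ^ 2 + b) / Real.sqrt (1 + s ^ 2 + b)) / (2 * h)
          ≤ (b - a - (t - m) ^ 2 - 2 * c * ψ s) / (2 * h) := by
            rw [div_eq_mul_inv, div_eq_mul_inv]
            exact mul_le_mul_of_nonneg_right hnum (by positivity)
        _ ≤ (b - a) / (2 * h) + (-((t - m) ^ 2) / 2 + -(c * ψ s) / 1) := by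
            have e1 : (b - a - (t - m) ^ 2 - 2 * c * ψ s) / (2 * h)
                = (b - a) / (2 * h) + (-((t - m) ^ 2) / (2 * h) + -(c * ψ s) / h) := by
              field_simp
              ring
            rw [e1]
            have e2 : -((t - m) ^ 2) / (2 * h) ≤ -((t - m) ^ 2) / 2 := by
              rw [neg_div, neg_div]
              exact neg_le_neg (div_le_div_of_nonneg_left (sq_nonneg _) h2h (by linarith))
            have e3 : -(c * ψ s) / h ≤ -(c * ψ s) / 1 := by
              rw [neg_div, neg_div]
              exact neg_le_neg (div_le_div_of_nonneg_left (mul_nonneg hc.le hψ) h0 h1)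
            linarith
    -- integrability of the bounding product
    have hH1 : Integrable
        (fun y : EuclideanSpace ℝ (Fin n) => Real.exp (-((‖x - y‖ - m) ^ 2) / 2)) :=
      (integrable_gauss_shell n m).comp_sub_left x
    have hG2 : Integrable
        (fun η : EuclideanSpace ℝ (Fin n) => Real.exp (-(c * ψ ‖η + Reξ‖) / 1)) :=
      (hFint 1 one_pos le_rfl).comp_add_right Reξ
    have hprod : Integrable
        (fun p : EuclideanSpace ℝ (Fin n) × EuclideanSpace ℝ (Fin n) =>
          Real.exp (-((‖x - p.1‖ - m) ^ 2) / 2) * Real.exp (-(c * ψ ‖p.2 + Reξ‖) / 1)) := by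
      rw [Measure.volume_eq_prod]
      exact hH1.mul_prod hG2
    have hsplit : (∫ p : EuclideanSpace ℝ (Fin n) × EuclideanSpace ℝ (Fin n),
          Real.exp (-((‖x - p.1‖ - m) ^ 2) / 2) * Real.exp (-(c * ψ ‖p.2 + Reξ‖) / 1))
        = K₁ * K₂ := by
      rw [Measure.volume_eq_prod,
        integral_prod_mul (fun z : EuclideanSpace ℝ (Fin n) => Real.exp (-(‖x - z‖ - m) ^ 2 / 2))
          (fun η : EuclideanSpace ℝ (Fin n) => Real.exp (-(c * ψ ‖η + Reξ‖) / 1))]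
      congr 1
      · exact integral_sub_left_eq_self
          (fun z : EuclideanSpace ℝ (Fin n) => Real.exp (-((‖z‖ - m) ^ 2) / 2)) volume x
      · exact integral_add_right_eq_self
          (fun η : EuclideanSpace ℝ (Fin n) => Real.exp (-(c * ψ ‖η‖) / 1)) Reξ
    have hexpfinal : Real.exp ((b - a) / (2 * h))
        ≤ Real.exp ((b - 1 * b / (2 * Real.sqrt (1 + b))) / (2 * h)) := by
      apply Real.exp_le_exp.2
      have haa : b / (2 * Real.sqrt (1 + b)) ≤ a := by
        rw [hadef]
        rw [div_le_div_iff₀ (by positivity) (by positivity)]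
        nlinarith [hsb, mul_nonneg hb hsb.le]
      rw [one_mul]
      apply div_le_div_of_nonneg_right ?_ ?_
      · linarith
      · linarith
    calc (∫ p : EuclideanSpace ℝ (Fin n) × EuclideanSpace ℝ (Fin n),
            Real.exp ((2 * m * ‖x - p.1‖ - ‖x - p.1‖ ^ 2
              - 1 * (‖p.2 + Reξ‖ ^ 2 + b) / Real.sqrt (1 + ‖p.2 + Reξ‖ ^ 2 + b)) / (2 * h)))
        ≤ ∫ p : EuclideanSpace ℝ (Fin n) × EuclideanSpace ℝ (Fin n),
            Real.exp ((b - a) / (2 * h))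
              * (Real.exp (-((‖x - p.1‖ - m) ^ 2) / 2)
                  * Real.exp (-(c * ψ ‖p.2 + Reξ‖) / 1)) := by
          apply integral_mono_of_nonneg
          · filter_upwards with p using (Real.exp_pos _).le
          · exact hprod.const_mul _
          · filter_upwards with p using hpt p
      _ = Real.exp ((b - a) / (2 * h)) * (K₁ * K₂) := by
          rw [integral_const_mul, hsplit]
      _ ≤ Real.exp ((b - 1 * b / (2 * Real.sqrt (1 + b))) / (2 * h)) * (K₁ * K₂ + 1) := by
          apply mul_le_mul hexpfinal (by linarith) (mul_nonneg hK₁ hK₂) (Real.exp_pos _).le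
      _ = (K₁ * K₂ + 1) * Real.exp ((b - 1 * b / (2 * Real.sqrt (1 + b))) / (2 * h)) :=
          mul_comm _ _
end

section
/- Let Φ₀(z) = |Im z|²/2 and suppose ψ(s,z,η) is a holomorphic generating function satisfying ∇_z ψ(s,z,η(s,z)) = -Im z and y(s,z) = ∇_η ψ(s,z,η(s,z)) with η(s,z) = -Im y(s,z), and suppose ψ solves ∂_s ψ + b(s, z, ∇_z ψ) = 0 where b(s,z,ζ) is a Hamiltonian with Im b(s, z, -Im z) = 0 for z in the relevant domain. Then the critical value s ↦ Φ₀(y(s,z)) - Im(ψ(s,z,η(s,z)) - y(s,z)·η(s,z)) is constant in s; its derivative equals -Im(∂_s ψ)(s,z,η(s,z)) = -Im b(s,z,-Im z) = 0. -/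
/-- Critical-value computation of Lemma 6.2 (pointcrit): under the critical-point
conditions (`η(s) = -Im y(s)`, `∇_η ψ = y(s)`, joint differentiability in `(s,η)` with
partial `∂_s ψ = ψs(s)`), the eikonal relation `ψs(s) = -b(s,z,-Im z)` and the reality
`Im b(s,z,-Im z) = 0`, the critical value
`s ↦ Φ₀(y(s)) - Im(ψ(s,z,η(s)) - y(s)·η(s))` has vanishing derivative, hence is
constant in `s`. -/
theorem stmt_13 (n : ℕ) (z : Fin n → ℂ)
    (ψ : ℝ → (Fin n → ℂ) → (Fin n → ℂ) → ℂ)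
    (b : ℝ → (Fin n → ℂ) → (Fin n → ℂ) → ℂ)
    (y η y' η' : ℝ → Fin n → ℂ) (ψs : ℝ → ℂ)
    (L : ℝ → (ℝ × (Fin n → ℂ)) →L[ℝ] ℂ)
    (hy : ∀ s, HasDerivAt y (y' s) s)
    (hη : ∀ s, HasDerivAt η (η' s) s)
    (hηreal : ∀ s j, η s j = (-(((y s j).im : ℝ)) : ℂ))
    (hL : ∀ s, HasFDerivAt (fun p : ℝ × (Fin n → ℂ) => ψ p.1 z p.2) (L s) (s, η s))
    (hLs : ∀ s, L s (1, 0) = ψs s)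
    (hLη : ∀ s v, L s (0, v) = ∑ j, y s j * v j)
    (heik : ∀ s, ψs s = -(b s z (fun j => (-((z j).im : ℝ) : ℂ))))
    (hbreal : ∀ s, (b s z (fun j => (-((z j).im : ℝ) : ℂ))).im = 0) :
    (∀ s, HasDerivAt
        (fun s => (∑ j, ((y s j).im) ^ 2) / 2
          - (ψ s z (η s) - ∑ j, y s j * η s j).im) 0 s)
    ∧ ∀ s₁ s₂,
        ((∑ j, ((y s₁ j).im) ^ 2) / 2
            - (ψ s₁ z (η s₁) - ∑ j, y s₁ j * η s₁ j).im)
          = ((∑ j, ((y s₂ j).im) ^ 2) / 2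
            - (ψ s₂ z (η s₂) - ∑ j, y s₂ j * η s₂ j).im) := by
  have key : ∀ s, HasDerivAt
      (fun s => (∑ j, ((y s j).im) ^ 2) / 2
        - (ψ s z (η s) - ∑ j, y s j * η s j).im) 0 s := by
    intro s
    have hyj : ∀ j, HasDerivAt (fun s => y s j) (y' s j) s :=
      fun j => hasDerivAt_pi.1 (hy s) j
    have hηj : ∀ j, HasDerivAt (fun s => η s j) (η' s j) s :=
      fun j => hasDerivAt_pi.1 (hη s) j
    -- derivative of ψ s z (η s)
    have hpair : HasDerivAt (fun s => ((s, η s) : ℝ × (Fin n → ℂ))) (1, η' s) s :=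
      (hasDerivAt_id s).prodMk (hη s)
    have hψ : HasDerivAt (fun s => ψ s z (η s)) (L s (1, η' s)) s :=
      by have := (hL s).comp_hasDerivAt s hpair; exact this
    have hLval : L s (1, η' s) = ψs s + ∑ j, y s j * η' s j := by
      have : ((1 : ℝ), η' s) = ((1 : ℝ), (0 : Fin n → ℂ)) + ((0 : ℝ), η' s) := by
        simp [Prod.ext_iff]
      rw [this, (L s).map_add, hLs s, hLη s]
    rw [hLval] at hψ
    have hsum2 : HasDerivAt (fun s => ∑ j, y s j * η s j)
        (∑ j, (y' s j * η s j + y s j * η' s j)) s :=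
      HasDerivAt.fun_sum fun j _ => (hyj j).mul (hηj j)
    have hIm : HasDerivAt (fun s => (ψ s z (η s) - ∑ j, y s j * η s j).im)
        ((ψs s + ∑ j, y s j * η' s j
          - ∑ j, (y' s j * η s j + y s j * η' s j)).im) s :=
      Complex.imCLM.hasFDerivAt.comp_hasDerivAt s (hψ.sub hsum2)
    have hA : HasDerivAt (fun s => (∑ j, ((y s j).im) ^ 2) / 2)
        ((∑ j, (2 : ℝ) * ((y s j).im) ^ 1 * ((y' s j).im)) / 2) s := by
      apply HasDerivAt.div_const
      exact HasDerivAt.fun_sum fun j _ =>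
        (Complex.imCLM.hasFDerivAt.comp_hasDerivAt s (hyj j)).pow 2
    have := hA.fun_sub hIm
    convert this using 1
    · rfl
    · rfl
    have hψsim : (ψs s).im = 0 := by
      rw [heik s]; simp [hbreal s]
    simp only [pow_one, Complex.sub_im, Complex.add_im, Complex.im_sum,
      Complex.mul_im, hηreal s, Complex.ofReal_im, Complex.ofReal_re, hψsim,
      neg_one_smul, Finset.sum_add_distrib, Finset.sum_neg_distrib,
      Complex.neg_im, Complex.neg_re, mul_zero, mul_neg, neg_zero,
      Finset.sum_const_zero, add_zero]
    have h2 : ∑ x, 2 * (y s x).im * (y' s x).im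
        = 2 * ∑ x, (y' s x).im * (y s x).im := by
      rw [Finset.mul_sum]; exact Finset.sum_congr rfl (fun _ _ => by ring)
    rw [h2]; ring
  refine ⟨key, fun s₁ s₂ => ?_⟩
  exact is_const_of_deriv_eq_zero (fun s => (key s).differentiableAt)
    (fun s => (key s).deriv) s₁ s₂
end

section
/- Let Φ: Ω → ℝ be C² on an open set Ω ⊂ ℂⁿ, z ∈ Ω, R > 0, r > 0 with the ball B(z, r) ⊂ Ω, and let C_r = (1/2)·sup_{|y-z|≤r} ‖Hess Φ(y)‖. Define φ_z(y,ζ) = Φ(y) - Im((z-y)·ζ). Then along the contour γ_z : ζ = (2/i)∇_z Φ(z) + i R·conj(z - y), |y - z| < r, one has φ_z(y,ζ) - Φ(z) = Φ(y) - Φ(z) - ∇_{Re z}Φ(z)·Re(y-z) - ∇_{Im z}Φ(z)·Im(y-z) - R|y-z|² ≤ (C_r - R)|y - z|². In particular γ_z is a good contour for φ_z as soon as R > C_r. -/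
/-- Second-order Taylor bound along a segment. -/
lemma taylor_aux {E : Type*} [NormedAddCommGroup E] [NormedSpace ℝ E]
    {Φ : E → ℝ} {Ω : Set E} (hΩ : IsOpen Ω) (hΦ : ContDiffOn ℝ 2 Φ Ω)
    {z v : E} {L : ℝ} (hL0 : 0 ≤ L)
    (hseg : segment ℝ z (z + v) ⊆ Ω)
    (hHess : ∀ x ∈ segment ℝ z (z + v), ‖fderiv ℝ (fun w => fderiv ℝ Φ w) x‖ ≤ L) :
    Φ (z + v) - Φ z - fderiv ℝ Φ z v ≤ L / 2 * ‖v‖ ^ 2 := by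
  have hdΦ : ∀ x ∈ Ω, DifferentiableAt ℝ Φ x := fun x hx =>
    ((hΦ.differentiableOn (by norm_num)).differentiableAt (hΩ.mem_nhds hx))
  have hd2 : ContDiffOn ℝ 1 (fderiv ℝ Φ) Ω := hΦ.fderiv_of_isOpen hΩ (by norm_num)
  have hd2' : ∀ x ∈ Ω, DifferentiableAt ℝ (fun w => fderiv ℝ Φ w) x := fun x hx =>
    ((hd2.differentiableOn one_ne_zero).differentiableAt (hΩ.mem_nhds hx))
  have hlip : ∀ x ∈ segment ℝ z (z + v), ‖fderiv ℝ Φ x - fderiv ℝ Φ z‖ ≤ L * ‖x - z‖ :=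
    fun x hx => Convex.norm_image_sub_le_of_norm_fderiv_le
      (fun w hw => hd2' w (hseg hw)) hHess (convex_segment _ _)
      (left_mem_segment ℝ z (z + v)) hx
  have hmem : ∀ t ∈ Set.Icc (0:ℝ) 1, z + t • v ∈ segment ℝ z (z + v) := by
    intro t ht
    rw [segment_eq_image']
    exact ⟨t, ht, by rw [add_sub_cancel_left]⟩
  set g : ℝ → ℝ := fun t => Φ (z + t • v) with hg
  have hg' : ∀ t ∈ Set.Icc (0:ℝ) 1, HasDerivAt g (fderiv ℝ Φ (z + t • v) v) t := by
    intro t ht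
    have hline : HasDerivAt (fun s : ℝ => z + s • v) v t := by
      simpa using ((hasDerivAt_id t).smul_const v).const_add z
    exact ((hdΦ _ (hseg (hmem t ht))).hasFDerivAt.comp_hasDerivAt t hline)
  set c : ℝ := fderiv ℝ Φ z v with hc
  set h : ℝ → ℝ := fun t => g t - t * c - L / 2 * ‖v‖ ^ 2 * t ^ 2 with hh
  have hh' : ∀ t ∈ Set.Icc (0:ℝ) 1,
      HasDerivAt h (fderiv ℝ Φ (z + t • v) v - c - L / 2 * ‖v‖ ^ 2 * (2 * t)) t := by
    intro t ht
    have h1 : HasDerivAt (fun s : ℝ => s * c) c t := by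
      simpa using (hasDerivAt_id t).mul_const c
    have h2 : HasDerivAt (fun s : ℝ => L / 2 * ‖v‖ ^ 2 * s ^ 2)
        (L / 2 * ‖v‖ ^ 2 * (2 * t)) t := by
      have := (hasDerivAt_pow 2 t).const_mul (L / 2 * ‖v‖ ^ 2)
      simpa using this
    exact ((hg' t ht).sub h1).sub h2
  have hanti : AntitoneOn h (Set.Icc (0:ℝ) 1) := by
    apply antitoneOn_of_deriv_nonpos (convex_Icc 0 1)
    · exact fun t ht => ((hh' t ht).continuousAt).continuousWithinAt
    · intro t ht
      rw [interior_Icc] at ht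
      exact ((hh' t ⟨ht.1.le, ht.2.le⟩).differentiableAt).differentiableWithinAt
    · intro t ht
      rw [interior_Icc] at ht
      rw [(hh' t ⟨ht.1.le, ht.2.le⟩).deriv]
      have hb : fderiv ℝ Φ (z + t • v) v - c ≤ L * t * ‖v‖ ^ 2 := by
        have h1 : fderiv ℝ Φ (z + t • v) v - c
            = (fderiv ℝ Φ (z + t • v) - fderiv ℝ Φ z) v := by
          simp [hc]
        rw [h1]
        calc (fderiv ℝ Φ (z + t • v) - fderiv ℝ Φ z) v
            ≤ ‖(fderiv ℝ Φ (z + t • v) - fderiv ℝ Φ z) v‖ := le_abs_self _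
          _ ≤ ‖fderiv ℝ Φ (z + t • v) - fderiv ℝ Φ z‖ * ‖v‖ :=
              ContinuousLinearMap.le_opNorm _ _
          _ ≤ (L * ‖z + t • v - z‖) * ‖v‖ := by
              gcongr
              exact hlip _ (hmem t ⟨ht.1.le, ht.2.le⟩)
          _ = L * ‖t • v‖ * ‖v‖ := by rw [add_sub_cancel_left]
          _ = L * (|t| * ‖v‖) * ‖v‖ := by rw [norm_smul, Real.norm_eq_abs]
          _ = L * t * ‖v‖ ^ 2 := by rw [abs_of_pos ht.1]; ring
      nlinarith
  have key := hanti (Set.left_mem_Icc.2 zero_le_one) (Set.right_mem_Icc.2 zero_le_one) zero_le_one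
  simp only [hh, hg] at key
  simp only [zero_smul, add_zero, one_smul, zero_mul, sub_zero, mul_zero,
    one_mul, one_pow, mul_one] at key
  norm_num at key
  linarith

/-- Along the contour `ζ = (2/i)∇_zΦ(z) + iR·conj(z-y)` one has
`φ_z(y,ζ) - Φ(z) = Φ(y) - Φ(z) - ∇_{Re z}Φ(z)·Re(y-z) - ∇_{Im z}Φ(z)·Im(y-z) - R|y-z|²`,
and, if `C_r` bounds half the Hessian of `Φ` on the ball of radius `r`,
`φ_z(y,ζ) - Φ(z) ≤ (C_r - R)|y-z|²` for `|y-z| ≤ r`; so the contour is good once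
`R > C_r`.  Here `φ_z(y,ζ) = Φ(y) - Im((z-y)·ζ)`. -/
theorem stmt_16 (n : ℕ) (Φ : (Fin n → ℂ) → ℝ) (Ω : Set (Fin n → ℂ))
    (z : Fin n → ℂ) (R r Cr : ℝ) (hr : 0 < r)
    (hΩ : IsOpen Ω) (hΦ : ContDiffOn ℝ 2 Φ Ω)
    (hball : ∀ y : Fin n → ℂ, (∑ j, Complex.normSq (y j - z j)) ≤ r ^ 2 → y ∈ Ω)
    (hCr : ∀ y : Fin n → ℂ, (∑ j, Complex.normSq (y j - z j)) ≤ r ^ 2 →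
      ‖fderiv ℝ (fun w => fderiv ℝ Φ w) y‖ ≤ 2 * Cr) :
    ∀ y : Fin n → ℂ,
      (Φ y - (∑ j, (z j - y j) *
          ((2 / Complex.I) *
              (((fderiv ℝ Φ z (Pi.single j 1) : ℝ) : ℂ)
                - Complex.I * ((fderiv ℝ Φ z (Pi.single j Complex.I) : ℝ) : ℂ)) / 2
            + Complex.I * (R : ℂ) * (starRingEnd ℂ) (z j - y j))).im
        - Φ z
        = Φ y - Φ z
          - (∑ j, fderiv ℝ Φ z (Pi.single j 1) * (y j - z j).re)
          - (∑ j, fderiv ℝ Φ z (Pi.single j Complex.I) * (y j - z j).im)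
          - R * ∑ j, Complex.normSq (y j - z j))
      ∧ ((∑ j, Complex.normSq (y j - z j)) ≤ r ^ 2 →
          Φ y - (∑ j, (z j - y j) *
              ((2 / Complex.I) *
                  (((fderiv ℝ Φ z (Pi.single j 1) : ℝ) : ℂ)
                    - Complex.I * ((fderiv ℝ Φ z (Pi.single j Complex.I) : ℝ) : ℂ)) / 2
                + Complex.I * (R : ℂ) * (starRingEnd ℂ) (z j - y j))).im
            - Φ z
            ≤ (Cr - R) * ∑ j, Complex.normSq (y j - z j)) := by
  intro y
  set a : Fin n → ℝ := fun j => fderiv ℝ Φ z (Pi.single j 1) with ha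
  set b : Fin n → ℝ := fun j => fderiv ℝ Φ z (Pi.single j Complex.I) with hb
  have him : (∑ j, (z j - y j) *
        ((2 / Complex.I) * (((a j : ℝ) : ℂ) - Complex.I * ((b j : ℝ) : ℂ)) / 2
          + Complex.I * (R : ℂ) * (starRingEnd ℂ) (z j - y j))).im
      = (∑ j, a j * (y j - z j).re) + (∑ j, b j * (y j - z j).im)
        + R * ∑ j, Complex.normSq (y j - z j) := by
    rw [Complex.im_sum, Finset.mul_sum, ← Finset.sum_add_distrib, ← Finset.sum_add_distrib]
    refine Finset.sum_congr rfl fun j _ => ?_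
    have hw : Complex.normSq (y j - z j) = Complex.normSq (z j - y j) := by
      rw [show y j - z j = -(z j - y j) by ring, Complex.normSq_neg]
    have hre : (y j - z j).re = -(z j - y j).re := by
      rw [show y j - z j = -(z j - y j) by ring, Complex.neg_re]
    have him' : (y j - z j).im = -(z j - y j).im := by
      rw [show y j - z j = -(z j - y j) by ring, Complex.neg_im]
    rw [hw, hre, him']
    simp only [Complex.mul_im, Complex.mul_re, Complex.div_re, Complex.div_im,
      Complex.normSq_apply, Complex.add_re, Complex.add_im, Complex.sub_re, Complex.sub_im,
      Complex.I_re, Complex.I_im, Complex.ofReal_re, Complex.ofReal_im,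
      Complex.conj_re, Complex.conj_im, Complex.re_ofNat, Complex.im_ofNat]
    ring
  constructor
  · rw [him]; ring
  · intro hS
    rw [him]
    have hSnn : 0 ≤ ∑ j, Complex.normSq (y j - z j) :=
      Finset.sum_nonneg fun j _ => Complex.normSq_nonneg _
    have hseg_ball : ∀ x ∈ segment ℝ z (z + (y - z)),
        (∑ j, Complex.normSq (x j - z j)) ≤ r ^ 2 := by
      intro x hx
      rw [segment_eq_image'] at hx
      obtain ⟨t, ht, hx⟩ := hx
      have hxj : ∀ j, x j - z j = t • (y j - z j) := by
        intro j
        rw [← hx]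
        simp [add_sub_cancel_left]
      have hsum : (∑ j, Complex.normSq (x j - z j))
          = t ^ 2 * ∑ j, Complex.normSq (y j - z j) := by
        rw [Finset.mul_sum]
        refine Finset.sum_congr rfl fun j _ => ?_
        rw [hxj j, Complex.real_smul, Complex.normSq_mul, Complex.normSq_ofReal]
        ring
      rw [hsum]
      have ht2 : t ^ 2 ≤ 1 := by nlinarith [ht.1, ht.2]
      nlinarith
    have hzΩseg : segment ℝ z (z + (y - z)) ⊆ Ω := fun x hx => hball x (hseg_ball x hx)
    have hHess : ∀ x ∈ segment ℝ z (z + (y - z)),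
        ‖fderiv ℝ (fun w => fderiv ℝ Φ w) x‖ ≤ 2 * Cr :=
      fun x hx => hCr x (hseg_ball x hx)
    have hCr0 : 0 ≤ Cr := by
      have h0 := hCr z (by simpa using (by positivity : (0:ℝ) ≤ r ^ 2))
      have := norm_nonneg (fderiv ℝ (fun w => fderiv ℝ Φ w) z)
      linarith
    have htay := taylor_aux hΩ hΦ (by linarith : (0:ℝ) ≤ 2 * Cr) hzΩseg hHess
    have hy : z + (y - z) = y := by abel
    rw [hy] at htay
    have hlin : fderiv ℝ Φ z (y - z)
        = (∑ j, a j * (y j - z j).re) + (∑ j, b j * (y j - z j).im) := by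
      have h1 : ∀ j : Fin n, (Pi.single j (y j - z j) : Fin n → ℂ)
          = ((y j - z j).re : ℝ) • (Pi.single j (1:ℂ) : Fin n → ℂ)
            + ((y j - z j).im : ℝ) • (Pi.single j Complex.I : Fin n → ℂ) := by
        intro j
        funext i
        by_cases hij : i = j
        · subst hij
          simp only [Pi.single_eq_same, Pi.add_apply, Pi.smul_apply, Complex.real_smul,
            mul_one]
          exact (Complex.re_add_im _).symm
        · simp [Pi.single_eq_of_ne hij]
      have hdecomp : (y - z : Fin n → ℂ)
          = ∑ j, (((y j - z j).re : ℝ) • (Pi.single j (1:ℂ) : Fin n → ℂ)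
              + ((y j - z j).im : ℝ) • (Pi.single j Complex.I : Fin n → ℂ)) := by
        rw [← Finset.univ_sum_single (y - z : Fin n → ℂ)]
        exact Finset.sum_congr rfl fun j _ => by rw [Pi.sub_apply]; exact h1 j
      rw [hdecomp, map_sum, ← Finset.sum_add_distrib]
      refine Finset.sum_congr rfl fun j _ => ?_
      rw [map_add, map_smul, map_smul]
      simp only [ha, hb, smul_eq_mul]
      ring
    have hnorm : ‖(y - z : Fin n → ℂ)‖ ^ 2 ≤ ∑ j, Complex.normSq (y j - z j) := by
      have h1 : ‖(y - z : Fin n → ℂ)‖ ≤ Real.sqrt (∑ j, Complex.normSq (y j - z j)) := by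
        apply (pi_norm_le_iff_of_nonneg (Real.sqrt_nonneg _)).2
        intro i
        rw [← Real.sqrt_sq (norm_nonneg ((y - z : Fin n → ℂ) i))]
        apply Real.sqrt_le_sqrt
        have h2 : ‖(y - z : Fin n → ℂ) i‖ ^ 2 = Complex.normSq (y i - z i) := by
          rw [Pi.sub_apply, ← Complex.sq_norm]
        rw [h2]
        exact Finset.single_le_sum (f := fun j => Complex.normSq (y j - z j))
          (fun j _ => Complex.normSq_nonneg _) (Finset.mem_univ i)
      calc ‖(y - z : Fin n → ℂ)‖ ^ 2
          ≤ Real.sqrt (∑ j, Complex.normSq (y j - z j)) ^ 2 := by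
            gcongr
        _ = ∑ j, Complex.normSq (y j - z j) := Real.sq_sqrt hSnn
    have hfin : Φ y - Φ z - ((∑ j, a j * (y j - z j).re) + (∑ j, b j * (y j - z j).im))
        ≤ Cr * ∑ j, Complex.normSq (y j - z j) := by
      rw [← hlin]
      calc Φ y - Φ z - fderiv ℝ Φ z (y - z)
          ≤ 2 * Cr / 2 * ‖(y - z : Fin n → ℂ)‖ ^ 2 := htay
        _ = Cr * ‖(y - z : Fin n → ℂ)‖ ^ 2 := by ring
        _ ≤ Cr * ∑ j, Complex.normSq (y j - z j) := by gcongr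
    linarith
end
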